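/- arXiv:1312.5225 — 2 statements merged into one kernel-verified Lean document; each statement's English description precedes it below -/
import Mathlib

section
/- Let F be a finite field with q elements and let k, s, t, d be integers with 1 ≤ k ≤ s ≤ t and 0 ≤ d ≤ s + t. Fix a tuple V⃗ = (a_k, …, a_{t−1}) ∈ F^{t−k}. Then the set of tuples (b_k, …, b_{s−1}) ∈ F^{s−k} for which there exist feature sets A, B ⊆ F with |A| = t, |B| = s, |A △ B| = d (symmetric difference of size d), the coefficient of X^j in χ_A equal to a_j for k ≤ j ≤ t−1, and the coefficient of X^j in χ_B equal to b_j for k ≤ j ≤ s−1, has cardinality at most q^d. -/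
open Polynomial Finset

/-- The characteristic polynomial of a finite subset `A` of a field:
`χ_A(X) = ∏_{a ∈ A} (X - a)`. -/
noncomputable def charPoly {F : Type*} [Field F] (A : Finset F) : F[X] :=
  ∏ a ∈ A, (X - C a)

lemma cp_monic {F : Type*} [Field F] (A : Finset F) : (charPoly A).Monic :=
  monic_prod_of_monic _ _ fun a _ => monic_X_sub_C a

lemma cp_natDegree {F : Type*} [Field F] (A : Finset F) :
    (charPoly A).natDegree = A.card := by
  rw [charPoly, natDegree_prod _ _ fun a _ => X_sub_C_ne_zero a]
  simp

lemma cp_ne_zero {F : Type*} [Field F] (A : Finset F) : charPoly A ≠ 0 :=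
  (cp_monic A).ne_zero

lemma cp_mul {F : Type*} [Field F] [DecidableEq F] (A B : Finset F) :
    charPoly B * charPoly (A \ B) = charPoly A * charPoly (B \ A) := by
  simp only [charPoly]
  rw [← prod_union (disjoint_sdiff), ← prod_union (disjoint_sdiff),
    union_sdiff_self_eq_union, union_sdiff_self_eq_union, union_comm]

lemma monic_ext' {F : Type*} [Field F] (p q : F[X]) (n : ℕ) (hp : p.Monic) (hq : q.Monic)
    (hpd : p.natDegree = n) (hqd : q.natDegree = n) (h : ∀ j < n, p.coeff j = q.coeff j) :
    p = q := by
  ext j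
  rcases lt_trichotomy j n with hj | rfl | hj
  · exact h j hj
  · rw [← hpd, hp.coeff_natDegree, hpd, ← hqd, hq.coeff_natDegree]
  · rw [coeff_eq_zero_of_natDegree_lt (hpd ▸ hj), coeff_eq_zero_of_natDegree_lt (hqd ▸ hj)]

lemma symmdiff_card' {F : Type*} [DecidableEq F] (A B : Finset F) :
    (symmDiff A B).card = (A \ B).card + (B \ A).card := by
  rw [symmDiff_def, sup_eq_union, card_union_of_disjoint disjoint_sdiff_sdiff]

lemma sdiff_cards {F : Type*} [DecidableEq F] (k s t d : ℕ) (A B : Finset F) (hst : s ≤ t)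
    (hA : A.card = t) (hB : B.card = s) (hd : (symmDiff A B).card = d) :
    (A \ B).card = (d + t - s) / 2 ∧ (B \ A).card = d - (d + t - s) / 2 ∧
      (d + t - s) / 2 ≤ d ∧ d - (d + t - s) / 2 ≤ (d + t - s) / 2 := by
  have c1 := Finset.card_inter_add_card_sdiff A B
  have c2 := Finset.card_inter_add_card_sdiff B A
  rw [Finset.inter_comm] at c2
  have c3 := symmdiff_card' A B
  omega

lemma key_lemma {F : Type*} [Field F] (P₁ P₂ Q₁ Q₂ p r : F[X]) (k : ℕ)
    (hp : p ≠ 0) (hdeg : r.natDegree ≤ p.natDegree)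
    (h₁ : P₁ * p = Q₁ * r) (h₂ : P₂ * p = Q₂ * r)
    (hQ : ∀ i, k ≤ i → Q₁.coeff i = Q₂.coeff i) :
    ∀ i, k ≤ i → P₁.coeff i = P₂.coeff i := by
  intro i hi
  have hDp : (P₁ - P₂) * p = (Q₁ - Q₂) * r := by rw [sub_mul, sub_mul, h₁, h₂]
  by_cases hD : P₁ - P₂ = 0
  · have := sub_eq_zero.mp hD; rw [this]
  · have hΔr : (Q₁ - Q₂) * r ≠ 0 := by rw [← hDp]; exact mul_ne_zero hD hp
    have hΔ : Q₁ - Q₂ ≠ 0 := left_ne_zero_of_mul hΔr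
    have hr : r ≠ 0 := right_ne_zero_of_mul hΔr
    have hnd : (P₁ - P₂).natDegree + p.natDegree = (Q₁ - Q₂).natDegree + r.natDegree := by
      rw [← natDegree_mul hD hp, ← natDegree_mul hΔ hr, hDp]
    have hΔk : (Q₁ - Q₂).natDegree < k := by
      by_contra hc
      push_neg at hc
      have h0 : (Q₁ - Q₂).coeff (Q₁ - Q₂).natDegree = 0 := by
        rw [coeff_sub, hQ _ hc, sub_self]
      exact hΔ (leadingCoeff_eq_zero.mp h0)
    have : (P₁ - P₂).natDegree < k := by omega
    have := coeff_eq_zero_of_natDegree_lt (lt_of_lt_of_le this hi)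
    rw [coeff_sub] at this
    exact sub_eq_zero.mp this

lemma pair_eq {F : Type*} [Field F] [DecidableEq F] (k s t d : ℕ) (hst : s ≤ t)
    (A₁ B₁ A₂ B₂ : Finset F)
    (hA₁ : A₁.card = t) (hB₁ : B₁.card = s) (hd₁ : (symmDiff A₁ B₁).card = d)
    (hA₂ : A₂.card = t) (hB₂ : B₂.card = s) (hd₂ : (symmDiff A₂ B₂).card = d)
    (hQ : ∀ i, k ≤ i → (charPoly A₁).coeff i = (charPoly A₂).coeff i)
    (hpp : charPoly (A₁ \ B₁) = charPoly (A₂ \ B₂))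
    (hrr : charPoly (B₁ \ A₁) = charPoly (B₂ \ A₂)) :
    ∀ i, k ≤ i → (charPoly B₁).coeff i = (charPoly B₂).coeff i := by
  obtain ⟨e1, e2, e3, e4⟩ := sdiff_cards k s t d A₁ B₁ hst hA₁ hB₁ hd₁
  obtain ⟨f1, f2, f3, f4⟩ := sdiff_cards k s t d A₂ B₂ hst hA₂ hB₂ hd₂
  refine key_lemma (charPoly B₁) (charPoly B₂) (charPoly A₁) (charPoly A₂)
    (charPoly (A₁ \ B₁)) (charPoly (B₁ \ A₁)) k (cp_ne_zero _) ?_ (cp_mul A₁ B₁) ?_ hQ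
  · rw [cp_natDegree, cp_natDegree, e1, e2]; omega
  · rw [hpp, hrr]; exact cp_mul A₂ B₂

/-- coefficient agreement for the `A`-side records -/
lemma record_agree {F : Type*} [Field F] (k t : ℕ) (hkt : k ≤ t) (a : Fin (t - k) → F)
    (A₁ A₂ : Finset F) (hA₁ : A₁.card = t) (hA₂ : A₂.card = t)
    (ha₁ : ∀ j : Fin (t - k), (charPoly A₁).coeff (k + (j : ℕ)) = a j)
    (ha₂ : ∀ j : Fin (t - k), (charPoly A₂).coeff (k + (j : ℕ)) = a j) :
    ∀ i, k ≤ i → (charPoly A₁).coeff i = (charPoly A₂).coeff i := by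
  intro i hi
  rcases lt_trichotomy i t with hit | rfl | hit
  · have hj : i - k < t - k := by omega
    have e₁ := ha₁ ⟨i - k, hj⟩
    have e₂ := ha₂ ⟨i - k, hj⟩
    have : k + (i - k) = i := by omega
    rw [this] at e₁ e₂
    rw [e₁, e₂]
  · have d₁ : (charPoly A₁).coeff i = 1 := by
      have := (cp_monic A₁).coeff_natDegree
      rwa [cp_natDegree, hA₁] at this
    have d₂ : (charPoly A₂).coeff i = 1 := by
      have := (cp_monic A₂).coeff_natDegree
      rwa [cp_natDegree, hA₂] at this
    rw [d₁, d₂]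
  · rw [coeff_eq_zero_of_natDegree_lt (by rw [cp_natDegree, hA₁]; exact hit),
      coeff_eq_zero_of_natDegree_lt (by rw [cp_natDegree, hA₂]; exact hit)]

open Classical in
noncomputable def recMap {F : Type*} [Field F] [DecidableEq F] (k s t d : ℕ)
    (a : Fin (t - k) → F) (b : Fin (s - k) → F) : Fin d → F := fun j =>
  if h : ∃ A B : Finset F,
      A.card = t ∧ B.card = s ∧ (symmDiff A B).card = d ∧
      (∀ i : Fin (t - k), (charPoly A).coeff (k + (i : ℕ)) = a i) ∧
      (∀ i : Fin (s - k), (charPoly B).coeff (k + (i : ℕ)) = b i) then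
    (if (j : ℕ) < (d + t - s) / 2 then
      (charPoly (h.choose \ h.choose_spec.choose)).coeff (j : ℕ)
     else (charPoly (h.choose_spec.choose \ h.choose)).coeff ((j : ℕ) - (d + t - s) / 2))
  else 0

/-- Lemma 5 of the paper: for a fixed deterministic vault record
`(a_k, …, a_{t−1})`, the number of deterministic vault records
`(b_k, …, b_{s−1})` arising from feature sets `B` of size `s` at symmetric
difference `d` from some feature set `A` of size `t` with record
`(a_k, …, a_{t−1})` is at most `q^d`. -/
theorem stmt4 {F : Type*} [Field F] [Fintype F] [DecidableEq F]
    (k s t d : ℕ) (hk : 1 ≤ k) (hks : k ≤ s) (hst : s ≤ t) (hd : d ≤ s + t)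
    (a : Fin (t - k) → F) :
    Set.ncard { b : Fin (s - k) → F | ∃ A B : Finset F,
        A.card = t ∧ B.card = s ∧ (symmDiff A B).card = d ∧
        (∀ j : Fin (t - k), (charPoly A).coeff (k + (j : ℕ)) = a j) ∧
        (∀ j : Fin (s - k), (charPoly B).coeff (k + (j : ℕ)) = b j) }
      ≤ (Fintype.card F) ^ d := by
  classical
  have hinj : Set.InjOn (recMap k s t d a)
      { b : Fin (s - k) → F | ∃ A B : Finset F,
        A.card = t ∧ B.card = s ∧ (symmDiff A B).card = d ∧
        (∀ j : Fin (t - k), (charPoly A).coeff (k + (j : ℕ)) = a j) ∧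
        (∀ j : Fin (s - k), (charPoly B).coeff (k + (j : ℕ)) = b j) } := by
    intro b₁ hb₁ b₂ hb₂ hfe
    have h₁ : ∃ A B : Finset F,
        A.card = t ∧ B.card = s ∧ (symmDiff A B).card = d ∧
        (∀ i : Fin (t - k), (charPoly A).coeff (k + (i : ℕ)) = a i) ∧
        (∀ i : Fin (s - k), (charPoly B).coeff (k + (i : ℕ)) = b₁ i) := hb₁
    have h₂ : ∃ A B : Finset F,
        A.card = t ∧ B.card = s ∧ (symmDiff A B).card = d ∧
        (∀ i : Fin (t - k), (charPoly A).coeff (k + (i : ℕ)) = a i) ∧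
        (∀ i : Fin (s - k), (charPoly B).coeff (k + (i : ℕ)) = b₂ i) := hb₂
    obtain ⟨hA1c, hB1c, hd1, ha1, hbb1⟩ := h₁.choose_spec.choose_spec
    obtain ⟨hA2c, hB2c, hd2, ha2, hbb2⟩ := h₂.choose_spec.choose_spec
    obtain ⟨e1, e2, e3, e4⟩ := sdiff_cards k s t d _ _ hst hA1c hB1c hd1
    obtain ⟨f1, f2, f3, f4⟩ := sdiff_cards k s t d _ _ hst hA2c hB2c hd2
    set dA := (d + t - s) / 2 with hdA
    -- p₁ = p₂
    have hpp : charPoly (h₁.choose \ h₁.choose_spec.choose)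
        = charPoly (h₂.choose \ h₂.choose_spec.choose) := by
      refine monic_ext' _ _ dA (cp_monic _) (cp_monic _)
        (by rw [cp_natDegree, e1]) (by rw [cp_natDegree, f1]) ?_
      intro j hj
      have hjd : j < d := lt_of_lt_of_le hj e3
      have e := congrFun hfe (⟨j, hjd⟩ : Fin d)
      simp only [recMap] at e
      rw [dif_pos h₁, dif_pos h₂] at e
      rw [if_pos hj, if_pos hj] at e
      exact e
    -- r₁ = r₂
    have hrr : charPoly (h₁.choose_spec.choose \ h₁.choose)
        = charPoly (h₂.choose_spec.choose \ h₂.choose) := by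
      refine monic_ext' _ _ (d - dA) (cp_monic _) (cp_monic _)
        (by rw [cp_natDegree, e2]) (by rw [cp_natDegree, f2]) ?_
      intro j hj
      have hjd : dA + j < d := by omega
      have e := congrFun hfe (⟨dA + j, hjd⟩ : Fin d)
      simp only [recMap] at e
      rw [dif_pos h₁, dif_pos h₂] at e
      have hnot : ¬ (dA + j < dA) := by omega
      rw [if_neg hnot, if_neg hnot, Nat.add_sub_cancel_left] at e
      exact e
    have hQ := record_agree k t (le_trans hks hst) a _ _ hA1c hA2c ha1 ha2
    have hB := pair_eq k s t d hst _ _ _ _ hA1c hB1c hd1 hA2c hB2c hd2 hQ hpp hrr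
    funext j
    have := hB (k + (j : ℕ)) (Nat.le_add_right k j)
    rw [hbb1 j, hbb2 j] at this
    exact this
  have hle := Set.ncard_le_ncard_of_injOn (recMap k s t d a)
    (fun b _ => Set.mem_univ _) hinj Set.finite_univ
  calc Set.ncard _ ≤ (Set.univ : Set (Fin d → F)).ncard := hle
    _ = (Fintype.card F) ^ d := by
        rw [Set.ncard_univ, Nat.card_eq_fintype_card, Fintype.card_fun, Fintype.card_fin]
end

section
/- Let F be a finite field with q elements and let k, t be integers with 1 ≤ k ≤ t. For every function g : F^{t−k} → F, the fraction of feature sets A ⊆ F with |A| = t (equivalently, the probability for a uniformly random such set) for which g(rec_k(A)) ∈ A is at most q^{t−k} · C(q, k−1) / (C(q, t) · C(t−1, k−1)). In particular, for fixed t, no algorithm can extract a single feature element from one deterministic vault record with success probability better than O(q^{−1}). -/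
set_option linter.unusedSectionVars false
set_option linter.unusedVariables false
set_option linter.deprecated false


open Polynomial Finset

/-- The deterministic vault record of a feature set `A` of size `n` with
parameter `k`: the tuple of coefficients of `X^k, …, X^{n−1}` of `χ_A`. -/
noncomputable def vRec {F : Type*} [Field F] (n k : ℕ) (A : Finset F) :
    Fin (n - k) → F :=
  fun j => (charPoly A).coeff (k + (j : ℕ))

section Aux
variable {F : Type*} [Field F] [DecidableEq F]

lemma charPoly_monic (A : Finset F) : (charPoly A).Monic :=
  monic_prod_of_monic _ _ fun a _ => monic_X_sub_C a

lemma charPoly_natDegree (A : Finset F) : (charPoly A).natDegree = A.card := by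
  unfold charPoly
  rw [natDegree_prod _ _ (fun a _ => X_sub_C_ne_zero a)]
  simp

lemma charPoly_injective : Function.Injective (charPoly (F := F)) := by
  intro A B h
  have h2 := congrArg Polynomial.roots h
  rw [charPoly, charPoly, roots_prod_X_sub_C, roots_prod_X_sub_C] at h2
  exact Finset.val_injective h2

lemma charPoly_eval_eq_zero {A : Finset F} {a : F} (ha : a ∈ A) :
    (charPoly A).eval a = 0 := by
  rw [charPoly, eval_prod]
  exact Finset.prod_eq_zero ha (by simp)

lemma coeff_eq_of_vRec_eq {s m : ℕ} {B B' : Finset F} (hB : B.card = s) (hB' : B'.card = s)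
    (hv : vRec s m B = vRec s m B') {i : ℕ} (hi : m ≤ i) :
    (charPoly B).coeff i = (charPoly B').coeff i := by
  rcases lt_or_ge i s with h | h
  · have hj : i - m < s - m := by omega
    have := congrFun hv ⟨i - m, hj⟩
    simpa [vRec, Nat.add_sub_cancel' hi] using this
  · rcases eq_or_lt_of_le h with heq | h
    · have e1 : (charPoly B).coeff s = 1 := by
        have := (charPoly_monic B).coeff_natDegree
        rwa [charPoly_natDegree, hB] at this
      have e2 : (charPoly B').coeff s = 1 := by
        have := (charPoly_monic B').coeff_natDegree
        rwa [charPoly_natDegree, hB'] at this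
      rw [← heq, e1, e2]
    · rw [coeff_eq_zero_of_natDegree_lt (by rw [charPoly_natDegree, hB]; exact h),
        coeff_eq_zero_of_natDegree_lt (by rw [charPoly_natDegree, hB']; exact h)]

lemma eq_of_shared {s m : ℕ} {B B' M : Finset F} (hB : B.card = s) (hB' : B'.card = s)
    (hv : vRec s m B = vRec s m B') (hM : M.card = m) (h1 : M ⊆ B) (h2 : M ⊆ B') :
    B = B' := by
  set d := charPoly B - charPoly B' with hd
  have hcoeff : ∀ i, m ≤ i → d.coeff i = 0 := by
    intro i hi
    rw [hd, coeff_sub, sub_eq_zero]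
    exact coeff_eq_of_vRec_eq hB hB' hv hi
  have hd0 : d = 0 := by
    by_contra hne
    have hdeg : d.natDegree < m := by
      by_contra hge
      exact (leadingCoeff_ne_zero.mpr hne) (hcoeff _ (le_of_not_gt hge))
    apply hne
    apply eq_zero_of_natDegree_lt_card_of_eval_eq_zero' d M
    · intro a ha
      rw [hd, eval_sub, charPoly_eval_eq_zero (h1 ha), charPoly_eval_eq_zero (h2 ha), sub_zero]
    · rwa [hM]
  exact charPoly_injective (sub_eq_zero.mp hd0)

lemma record_count [Fintype F] (s m : ℕ) (w : Fin (s - m) → F) :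
    (univ.filter (fun B : Finset F => B.card = s ∧ vRec s m B = w)).card * s.choose m
      ≤ (Fintype.card F).choose m := by
  classical
  set T := univ.filter (fun B : Finset F => B.card = s ∧ vRec s m B = w) with hT
  have hmem : ∀ B ∈ T, B.card = s ∧ vRec s m B = w := by
    intro B hBT
    simpa [hT] using hBT
  have hdisj : ∀ B ∈ T, ∀ B' ∈ T, B ≠ B' →
      Disjoint (powersetCard m B) (powersetCard m B') := by
    intro B hBt B' hBt' hne
    rw [Finset.disjoint_left]
    intro M hMB hMB'
    rw [Finset.mem_powersetCard] at hMB hMB'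
    exact hne (eq_of_shared (hmem B hBt).1 (hmem B' hBt').1
      ((hmem B hBt).2.trans (hmem B' hBt').2.symm) hMB.2 hMB.1 hMB'.1)
  calc T.card * s.choose m = ∑ B ∈ T, (powersetCard m B).card := by
        rw [Finset.sum_congr rfl (fun B hBt => by
          rw [Finset.card_powersetCard, (hmem B hBt).1]), Finset.sum_const, smul_eq_mul]
    _ = (T.biUnion (fun B => powersetCard m B)).card := (Finset.card_biUnion hdisj).symm
    _ ≤ (powersetCard m (univ : Finset F)).card := by
        apply Finset.card_le_card
        intro M hM
        rw [Finset.mem_biUnion] at hM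
        obtain ⟨B, _, hMB⟩ := hM
        exact Finset.powersetCard_mono (Finset.subset_univ B) hMB
    _ = (Fintype.card F).choose m := by rw [Finset.card_powersetCard, Finset.card_univ]

lemma erase_coeff_eq {k : ℕ} (hk : 1 ≤ k) {c : F} {A A' : Finset F}
    (hc : c ∈ A) (hc' : c ∈ A')
    (hcoeff : ∀ i, k ≤ i → (charPoly A).coeff i = (charPoly A').coeff i) :
    ∀ j, k - 1 ≤ j → (charPoly (A.erase c)).coeff j = (charPoly (A'.erase c)).coeff j := by
  have hA : charPoly A = (X - C c) * charPoly (A.erase c) := by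
    rw [charPoly, charPoly]; exact (Finset.mul_prod_erase A _ hc).symm
  have hA' : charPoly A' = (X - C c) * charPoly (A'.erase c) := by
    rw [charPoly, charPoly]; exact (Finset.mul_prod_erase A' _ hc').symm
  set d := charPoly (A.erase c) - charPoly (A'.erase c) with hd
  have hmul : (X - C c) * d = charPoly A - charPoly A' := by
    rw [hd, mul_sub, ← hA, ← hA']
  intro j hj
  rw [← sub_eq_zero, ← coeff_sub, ← hd]
  by_contra hne
  have hdne : d ≠ 0 := fun h => hne (by rw [h, coeff_zero])
  have hn : j ≤ d.natDegree := le_natDegree_of_ne_zero hne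
  set n := d.natDegree with hdn
  have key : ((X - C c) * d).coeff (n + 1) = 0 := by
    rw [hmul, coeff_sub, sub_eq_zero]
    exact hcoeff _ (by omega)
  have key2 : ((X - C c) * d).coeff (n + 1) = d.leadingCoeff := by
    rw [sub_mul, coeff_sub, coeff_X_mul,
      coeff_C_mul, coeff_eq_zero_of_natDegree_lt (by omega : d.natDegree < n + 1),
      mul_zero, sub_zero]
    rfl
  exact leadingCoeff_ne_zero.mpr hdne (key2.symm.trans key)

lemma vRec_erase_eq {k t : ℕ} (hk : 1 ≤ k) {c : F} {A A' : Finset F}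
    (hA : A.card = t) (hA' : A'.card = t) (hc : c ∈ A) (hc' : c ∈ A')
    (hv : vRec t k A = vRec t k A') :
    vRec (t - 1) (k - 1) (A.erase c) = vRec (t - 1) (k - 1) (A'.erase c) := by
  funext j
  have := erase_coeff_eq hk hc hc'
    (fun i hi => coeff_eq_of_vRec_eq hA hA' hv hi) (k - 1 + (j : ℕ)) (by omega)
  simpa [vRec] using this

lemma main_count [Fintype F] (k t : ℕ) (hk : 1 ≤ k) (hkt : k ≤ t)
    (g : (Fin (t - k) → F) → F) :
    (univ.filter (fun A : Finset F => A.card = t ∧ g (vRec t k A) ∈ A)).card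
        * (t - 1).choose (k - 1)
      ≤ (Fintype.card F) ^ (t - k) * (Fintype.card F).choose (k - 1) := by
  classical
  set S := univ.filter (fun A : Finset F => A.card = t ∧ g (vRec t k A) ∈ A) with hS
  have hfib : ∀ r : Fin (t - k) → F,
      (S.filter (fun A => vRec t k A = r)).card * (t - 1).choose (k - 1)
        ≤ (Fintype.card F).choose (k - 1) := by
    intro r
    set Sr := S.filter (fun A => vRec t k A = r) with hSr
    rcases Sr.eq_empty_or_nonempty with he | ⟨A₀, hA₀⟩
    · simp [he]
    have hmem : ∀ A ∈ Sr, A.card = t ∧ g (vRec t k A) ∈ A ∧ vRec t k A = r := by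
      intro A hA
      simp only [hSr, hS, Finset.mem_filter, Finset.mem_univ, true_and] at hA
      tauto
    have hcA : ∀ A ∈ Sr, g r ∈ A := by
      intro A hA
      have h := hmem A hA
      rw [← h.2.2]; exact h.2.1
    set w := vRec (t - 1) (k - 1) (A₀.erase (g r)) with hw
    have hcard : Sr.card ≤ (univ.filter
        (fun B : Finset F => B.card = t - 1 ∧ vRec (t - 1) (k - 1) B = w)).card := by
      apply Finset.card_le_card_of_injOn (fun A => A.erase (g r))
      · intro A hA
        show A.erase (g r) ∈ univ.filter (fun B : Finset F => B.card = t - 1 ∧ vRec (t - 1) (k - 1) B = w)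
        simp only [Finset.mem_filter, Finset.mem_univ, true_and]
        refine ⟨by rw [Finset.card_erase_of_mem (hcA A hA), (hmem A hA).1], ?_⟩
        exact vRec_erase_eq hk (hmem A hA).1 (hmem A₀ hA₀).1 (hcA A hA) (hcA A₀ hA₀)
          ((hmem A hA).2.2.trans (hmem A₀ hA₀).2.2.symm)
      · intro A hA A' hA' h
        have h2 : insert (g r) (A.erase (g r)) = insert (g r) (A'.erase (g r)) := by
          simp only at h; rw [h]
        rwa [Finset.insert_erase (hcA A hA), Finset.insert_erase (hcA A' hA')] at h2
    calc Sr.card * (t - 1).choose (k - 1)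
        ≤ (univ.filter (fun B : Finset F => B.card = t - 1 ∧
            vRec (t - 1) (k - 1) B = w)).card * (t - 1).choose (k - 1) :=
          Nat.mul_le_mul_right _ hcard
      _ ≤ (Fintype.card F).choose (k - 1) := by
          have := record_count (F := F) (t - 1) (k - 1) w
          rwa [show (t - 1).choose (k - 1) = (t - 1).choose (k - 1) from rfl] at this
  have hsum : S.card = ∑ r : Fin (t - k) → F,
      (S.filter (fun A => vRec t k A = r)).card :=
    Finset.card_eq_sum_card_fiberwise (fun A _ => Finset.mem_univ (vRec t k A))
  calc S.card * (t - 1).choose (k - 1)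
      = ∑ r : Fin (t - k) → F,
          (S.filter (fun A => vRec t k A = r)).card * (t - 1).choose (k - 1) := by
        rw [hsum, Finset.sum_mul]
    _ ≤ ∑ _r : Fin (t - k) → F, (Fintype.card F).choose (k - 1) :=
        Finset.sum_le_sum (fun r _ => hfib r)
    _ = (Fintype.card F) ^ (t - k) * (Fintype.card F).choose (k - 1) := by
        rw [Finset.sum_const, smul_eq_mul, Finset.card_univ, Fintype.card_fun,
          Fintype.card_fin]

end Aux

/-- Corollary 5 of the paper: the probability (over a uniformly random feature
set `A` of size `t`) that `g` extracts from the single deterministic vault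
record an element of `A` is at most
`q^{t−k}·C(q,k−1) / (C(q,t)·C(t−1,k−1))`, which is `O(q^{−1})` for fixed `t`. -/
theorem stmt9 {F : Type*} [Field F] [Fintype F] [DecidableEq F]
    (k t : ℕ) (hk : 1 ≤ k) (hkt : k ≤ t)
    (g : (Fin (t - k) → F) → F) :
    (Set.ncard { A : Finset F | A.card = t ∧ g (vRec t k A) ∈ A } : ℚ)
      / (Set.ncard { A : Finset F | A.card = t } : ℚ)
      ≤ (((Fintype.card F) ^ (t - k) * (Fintype.card F).choose (k - 1) : ℕ) : ℚ)
        / ((((Fintype.card F).choose t * (t - 1).choose (k - 1) : ℕ)) : ℚ) := by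
  classical
  have e1 : { A : Finset F | A.card = t ∧ g (vRec t k A) ∈ A }
      = ↑(univ.filter (fun A : Finset F => A.card = t ∧ g (vRec t k A) ∈ A)) := by
    ext A; simp
  have e2 : { A : Finset F | A.card = t }
      = ↑(univ.filter (fun A : Finset F => A.card = t)) := by
    ext A; simp
  rw [e1, e2, Set.ncard_coe_finset, Set.ncard_coe_finset]
  set N := (univ.filter (fun A : Finset F => A.card = t ∧ g (vRec t k A) ∈ A)).card with hN
  have hD : (univ.filter (fun A : Finset F => A.card = t)).card
      = (Fintype.card F).choose t := by
    rw [show (univ.filter (fun A : Finset F => A.card = t)) = powersetCard t univ by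
      ext A; simp [Finset.mem_powersetCard_univ]]
    rw [Finset.card_powersetCard, Finset.card_univ]
  rw [hD]
  by_cases hqt : t ≤ Fintype.card F
  · have h1 : 0 < (Fintype.card F).choose t := Nat.choose_pos hqt
    have h2 : 0 < (t - 1).choose (k - 1) := Nat.choose_pos (by omega)
    have hkey := main_count (F := F) k t hk hkt g
    rw [div_le_div_iff₀ (by exact_mod_cast h1) (by
      have : 0 < (Fintype.card F).choose t * (t - 1).choose (k - 1) := Nat.mul_pos h1 h2
      exact_mod_cast this)]
    push_cast
    have hkeyQ : (N : ℚ) * ((t - 1).choose (k - 1) : ℚ)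
        ≤ ((Fintype.card F : ℚ)) ^ (t - k) * ((Fintype.card F).choose (k - 1) : ℚ) := by
      exact_mod_cast hkey
    nlinarith [hkeyQ, (by positivity : (0:ℚ) ≤ ((Fintype.card F).choose t : ℚ))]
  · have hN0 : N = 0 := by
      rw [hN, Finset.card_eq_zero]
      ext A
      simp only [Finset.mem_filter, Finset.mem_univ, true_and, Finset.notMem_empty,
        iff_false, not_and]
      intro hcard
      exfalso
      exact hqt (hcard ▸ Finset.card_le_univ A |>.trans_eq (Finset.card_univ))
    have hch : (Fintype.card F).choose t = 0 := Nat.choose_eq_zero_of_lt (by omega)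
    rw [hN0, hch]
    simp
end
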